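/- Let k = 𝔽₂ and R = 𝔽₂[X,Y]/(X,Y)². Then the Gorenstein dimension of Der_k(R) is infinite, i.e., Der_k(R) admits no finite resolution by totally reflexive R-modules. -/

import Mathlib

set_option synthInstance.maxHeartbeats 1000000
set_option maxHeartbeats 1000000

open MvPolynomial CategoryTheory

/-- The `i`-th Ext group `Ext^i_R(M, N)` of `R`-modules. -/
noncomputable abbrev extGroup (R : Type) [CommRing R] (M N : ModuleCat R) (i : ℕ) : Type :=
  ((Ext R (ModuleCat R) i).obj (Opposite.op M)).obj N

/-- An `R`-module `M` is totally reflexive if the natural map `M → M**` is an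
isomorphism and `Extⁱ_R(M,R) = Extⁱ_R(M*,R) = 0` for all `i ≥ 1`. -/
def TotallyReflexive (R : Type) [CommRing R] (M : Type) [AddCommGroup M] [Module R M] : Prop :=
  Function.Bijective (Module.Dual.eval R M) ∧
  ∀ i : ℕ, 1 ≤ i →
    Subsingleton (extGroup R (ModuleCat.of R M) (ModuleCat.of R R) i) ∧
    Subsingleton (extGroup R (ModuleCat.of R (Module.Dual R M)) (ModuleCat.of R R) i)

/-- `GdimLE R n M` holds when `M` admits a resolution of length `≤ n` by totally
reflexive `R`-modules, i.e. the Gorenstein dimension of `M` is at most `n`. -/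
def GdimLE (R : Type) [CommRing R] : ℕ → ∀ (M : Type) [AddCommGroup M] [Module R M], Prop
  | 0, M, _, _ => TotallyReflexive R M
  | (n+1), M, _, _ => ∃ (G : Type) (_ : AddCommGroup G) (_ : Module R G)
      (f : G →ₗ[R] M), Function.Surjective f ∧ TotallyReflexive R G ∧
      GdimLE R n (LinearMap.ker f)

/-- The ring `R = 𝔽₂[X,Y]/(X,Y)²`. -/
noncomputable abbrev R12 : Type :=
  MvPolynomial (Fin 2) (ZMod 2) ⧸
    ((Ideal.span {(X 0 : MvPolynomial (Fin 2) (ZMod 2)), X 1}) ^ 2)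

namespace Stmt12

open TrivSqZeroExt

noncomputable section

abbrev PP : Type := MvPolynomial (Fin 2) (ZMod 2)
abbrev II : Ideal PP := Ideal.span {X 0, X 1}
abbrev JJ : Ideal PP := II ^ 2
abbrev AA : Type := TrivSqZeroExt (ZMod 2) (ZMod 2 × ZMod 2)

def phiP : PP →ₐ[ZMod 2] AA := aeval ![inr (1,0), inr (0,1)]

lemma zmod2_cases (c : ZMod 2) : c = 0 ∨ c = 1 := by revert c; decide

lemma fst_phiP (p : PP) (hp : p ∈ II) : fst (phiP p) = 0 := by
  have h : II ≤ RingHom.ker ((fstHom (ZMod 2) (ZMod 2) (ZMod 2 × ZMod 2)).comp phiP).toRingHom := by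
    rw [Ideal.span_le]
    rintro q hq
    simp only [Set.mem_insert_iff, Set.mem_singleton_iff] at hq
    rcases hq with rfl | rfl <;>
      simp [phiP, RingHom.mem_ker]
  simpa [RingHom.mem_ker] using h hp

lemma JJ_le_ker : ∀ p ∈ JJ, phiP p = 0 := by
  intro p hp
  have h : JJ ≤ RingHom.ker phiP.toRingHom := by
    rw [show JJ = II * II from pow_two II, Ideal.mul_le]
    intro r hr s hs
    have hr' := fst_phiP r hr
    have hs' := fst_phiP s hs
    have : phiP (r * s) = phiP r * phiP s := map_mul _ _ _
    rw [RingHom.mem_ker]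
    show phiP (r * s) = 0
    ext <;> simp [this, snd_mul, hr', hs']
  simpa [RingHom.mem_ker] using h hp

def phiQ : R12 →ₐ[ZMod 2] AA := Ideal.Quotient.liftₐ JJ phiP JJ_le_ker

def xx : R12 := Ideal.Quotient.mk JJ (X 0)
def yy : R12 := Ideal.Quotient.mk JJ (X 1)

@[simp] lemma phiQ_mk (p : PP) : phiQ (Ideal.Quotient.mk JJ p) = phiP p :=
  Ideal.Quotient.liftₐ_apply _ _ _ _

@[simp] lemma phiQ_xx : phiQ xx = inr (1,0) := by simp [xx, phiP]
@[simp] lemma phiQ_yy : phiQ yy = inr (0,1) := by simp [yy, phiP]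

def cc (r : R12) : ZMod 2 := fst (phiQ r)
def ax (r : R12) : ZMod 2 := (snd (phiQ r)).1
def ay (r : R12) : ZMod 2 := (snd (phiQ r)).2

lemma const_sub_mem (p : PP) : p - C (coeff 0 p) ∈ II := by
  induction p using MvPolynomial.induction_on with
  | C a => simp
  | add p q hp hq =>
      have : p + q - C (coeff 0 (p + q)) = (p - C (coeff 0 p)) + (q - C (coeff 0 q)) := by
        rw [coeff_add, map_add]; ring
      rw [this]; exact add_mem hp hq
  | mul_X p i hp =>
      have h1 : p * X i ∈ II := Ideal.mul_mem_left _ _ (Ideal.subset_span (by fin_cases i <;> simp))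
      have h2 : coeff 0 (p * X i) = 0 := by
        classical
        rw [coeff_mul_X']
        simp
      rw [h2]; simpa using h1

lemma affine_decomp (p : PP) : ∃ c a b : ZMod 2, p - (C c + C a * X 0 + C b * X 1) ∈ JJ := by
  obtain ⟨u, v, huv⟩ := Ideal.mem_span_pair.mp (const_sub_mem p)
  refine ⟨coeff 0 p, coeff 0 u, coeff 0 v, ?_⟩
  have h1 : (u - C (coeff 0 u)) * X 0 ∈ JJ := by
    rw [show JJ = II * II from pow_two II]
    exact Ideal.mul_mem_mul (const_sub_mem u) (Ideal.subset_span (by simp))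
  have h2 : (v - C (coeff 0 v)) * X 1 ∈ JJ := by
    rw [show JJ = II * II from pow_two II]
    exact Ideal.mul_mem_mul (const_sub_mem v) (Ideal.subset_span (by simp))
  have key : p - (C (coeff 0 p) + C (coeff 0 u) * X 0 + C (coeff 0 v) * X 1)
      = (u - C (coeff 0 u)) * X 0 + (v - C (coeff 0 v)) * X 1 := by
    linear_combination -huv
  rw [key]; exact add_mem h1 h2

lemma mk_C (c : ZMod 2) : Ideal.Quotient.mk JJ (C c) = algebraMap (ZMod 2) R12 c := by
  rw [show (C c : PP) = algebraMap (ZMod 2) PP c from rfl, Ideal.Quotient.mk_algebraMap]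

@[simp] lemma cc_alg (c : ZMod 2) : cc (algebraMap (ZMod 2) R12 c) = c := by
  simp [cc, AlgHom.commutes, algebraMap_eq_inl]
@[simp] lemma ax_alg (c : ZMod 2) : ax (algebraMap (ZMod 2) R12 c) = 0 := by
  simp [ax, AlgHom.commutes, algebraMap_eq_inl]
@[simp] lemma ay_alg (c : ZMod 2) : ay (algebraMap (ZMod 2) R12 c) = 0 := by
  simp [ay, AlgHom.commutes, algebraMap_eq_inl]
@[simp] lemma cc_xx : cc xx = 0 := by simp [cc]
@[simp] lemma ax_xx : ax xx = 1 := by simp [ax]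
@[simp] lemma ay_xx : ay xx = 0 := by simp [ay]
@[simp] lemma cc_yy : cc yy = 0 := by simp [cc]
@[simp] lemma ax_yy : ax yy = 0 := by simp [ax]
@[simp] lemma ay_yy : ay yy = 1 := by simp [ay]

lemma cc_mul (r s : R12) : cc (r * s) = cc r * cc s := by simp [cc, map_mul]

lemma ax_mul (r s : R12) : ax (r * s) = cc r * ax s + cc s * ax r := by
  simp [ax, cc, map_mul, snd_mul]

lemma repr (r : R12) : r = algebraMap (ZMod 2) R12 (cc r)
    + algebraMap (ZMod 2) R12 (ax r) * xx + algebraMap (ZMod 2) R12 (ay r) * yy := by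
  obtain ⟨p, rfl⟩ := Ideal.Quotient.mk_surjective r
  obtain ⟨c, a, b, h⟩ := affine_decomp p
  have e1 : Ideal.Quotient.mk JJ p
      = algebraMap (ZMod 2) R12 c + algebraMap (ZMod 2) R12 a * xx
        + algebraMap (ZMod 2) R12 b * yy := by
    rw [← mk_C c, ← mk_C a, ← mk_C b]
    rw [show xx = Ideal.Quotient.mk JJ (X 0) from rfl, show yy = Ideal.Quotient.mk JJ (X 1) from rfl]
    rw [← map_mul, ← map_mul, ← map_add, ← map_add]
    exact (Ideal.Quotient.mk_eq_mk_iff_sub_mem _ _).mpr h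
  have hc : cc (Ideal.Quotient.mk JJ p) = c := by rw [e1]; simp [cc, map_add, map_mul, algebraMap_eq_inl', snd_mul]
  have ha : ax (Ideal.Quotient.mk JJ p) = a := by
    rw [e1]; simp [ax, map_add, map_mul, snd_mul, algebraMap_eq_inl]
  have hb : ay (Ideal.Quotient.mk JJ p) = b := by
    rw [e1]; simp [ay, map_add, map_mul, snd_mul, algebraMap_eq_inl]
  rw [hc, ha, hb]; exact e1

lemma xx_mul_xx : xx * xx = 0 := by
  have h : (X 0 * X 0 : PP) ∈ JJ := by
    rw [show JJ = II * II from pow_two II]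
    exact Ideal.mul_mem_mul (Ideal.subset_span (by simp)) (Ideal.subset_span (by simp))
  show Ideal.Quotient.mk JJ (X 0) * Ideal.Quotient.mk JJ (X 0) = 0
  rw [← map_mul, Ideal.Quotient.eq_zero_iff_mem]; exact h

lemma xx_mul_yy : xx * yy = 0 := by
  have h : (X 0 * X 1 : PP) ∈ JJ := by
    rw [show JJ = II * II from pow_two II]
    exact Ideal.mul_mem_mul (Ideal.subset_span (by simp)) (Ideal.subset_span (by simp))
  show Ideal.Quotient.mk JJ (X 0) * Ideal.Quotient.mk JJ (X 1) = 0
  rw [← map_mul, Ideal.Quotient.eq_zero_iff_mem]; exact h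

lemma yy_mul_yy : yy * yy = 0 := by
  have h : (X 1 * X 1 : PP) ∈ JJ := by
    rw [show JJ = II * II from pow_two II]
    exact Ideal.mul_mem_mul (Ideal.subset_span (by simp)) (Ideal.subset_span (by simp))
  show Ideal.Quotient.mk JJ (X 1) * Ideal.Quotient.mk JJ (X 1) = 0
  rw [← map_mul, Ideal.Quotient.eq_zero_iff_mem]; exact h

lemma xx_ne_zero : xx ≠ 0 := by
  intro h
  have h1 := congrArg phiQ h
  rw [phiQ_xx, map_zero] at h1
  have h2 := congrArg snd h1
  simp at h2

lemma yy_ne_zero : yy ≠ 0 := by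
  intro h
  have h1 := congrArg phiQ h
  rw [phiQ_yy, map_zero] at h1
  have h2 := congrArg snd h1
  simp at h2

lemma xx_ne_yy : xx ≠ yy := by
  intro h
  have := congrArg phiQ h
  rw [phiQ_xx, phiQ_yy] at this
  have := congrArg (fun z => (snd z).1) this
  simp at this

lemma mul_xx (r : R12) : r * xx = algebraMap (ZMod 2) R12 (cc r) * xx := by
  conv_lhs => rw [repr r]
  rw [add_mul, add_mul, mul_assoc, mul_assoc, xx_mul_xx, mul_comm yy xx, xx_mul_yy]
  ring

lemma mul_yy (r : R12) : r * yy = algebraMap (ZMod 2) R12 (cc r) * yy := by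
  conv_lhs => rw [repr r]
  rw [add_mul, add_mul, mul_assoc, mul_assoc, xx_mul_yy, yy_mul_yy]
  ring

lemma cc_eq_zero_of_mul_xx {r : R12} (h : r * xx = 0) : cc r = 0 := by
  rcases zmod2_cases (cc r) with hc | hc
  · exact hc
  · exfalso
    rw [mul_xx, hc] at h
    simp at h
    exact xx_ne_zero h

lemma comp_zero {c a b : ZMod 2}
    (h : algebraMap (ZMod 2) R12 c + algebraMap (ZMod 2) R12 a * xx
        + algebraMap (ZMod 2) R12 b * yy = 0) : c = 0 ∧ a = 0 ∧ b = 0 := by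
  have h0 := congrArg phiQ h
  simp only [map_add, map_mul, AlgHom.commutes, algebraMap_eq_inl, phiQ_xx, phiQ_yy, map_zero] at h0
  refine ⟨?_, ?_, ?_⟩
  · have := congrArg fst h0; simpa [snd_mul] using this
  · have := congrArg (fun z => (snd z).1) h0; simpa [snd_mul] using this
  · have := congrArg (fun z => (snd z).2) h0; simpa [snd_mul] using this

section Modules

variable {G : Type} [AddCommGroup G] [Module R12 G]

/-- The submodule `mG = xG + yG`. -/
def SS (G : Type) [AddCommGroup G] [Module R12 G] : Submodule R12 G where
  carrier := {g | ∃ a b : G, g = xx • a + yy • b}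
  add_mem' := by
    rintro g h ⟨a, b, rfl⟩ ⟨a', b', rfl⟩
    exact ⟨a + a', b + b', by rw [smul_add, smul_add]; abel⟩
  zero_mem' := ⟨0, 0, by simp⟩
  smul_mem' := by
    rintro r g ⟨a, b, rfl⟩
    refine ⟨r • a, r • b, ?_⟩
    rw [smul_add, smul_smul, smul_smul, mul_comm r xx, mul_comm r yy, ← smul_smul, ← smul_smul]

lemma xx_smul_mem (g : G) : xx • g ∈ SS G := ⟨g, 0, by simp⟩
lemma yy_smul_mem (g : G) : yy • g ∈ SS G := ⟨0, g, by simp⟩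

lemma alg_smul_zero (g : G) : algebraMap (ZMod 2) R12 (0 : ZMod 2) • g = 0 := by simp
lemma alg_smul_one (g : G) : algebraMap (ZMod 2) R12 (1 : ZMod 2) • g = g := by simp

lemma smul_decomp (r : R12) (g : G) :
    r • g = algebraMap (ZMod 2) R12 (cc r) • g
      + (xx • (algebraMap (ZMod 2) R12 (ax r) • g) + yy • (algebraMap (ZMod 2) R12 (ay r) • g)) := by
  conv_lhs => rw [repr r]
  rw [add_smul, add_smul, mul_comm _ xx, mul_comm _ yy, mul_smul, mul_smul]
  abel

lemma exists_lamG {v : G} (hv : v ∉ SS G) :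
    ∃ l : G →+ ZMod 2, l v = 1 ∧ ∀ g ∈ SS G, l g = 0 := by
  classical
  letI : Module (ZMod 2) (G ⧸ SS G) := Module.compHom _ (algebraMap (ZMod 2) R12)
  have hvV : (Submodule.Quotient.mk v : G ⧸ SS G) ≠ 0 := by
    simpa [Submodule.Quotient.mk_eq_zero] using hv
  obtain ⟨lam, hlam⟩ : ∃ lam : (G ⧸ SS G) →ₗ[ZMod 2] ZMod 2,
      lam (Submodule.Quotient.mk v) ≠ 0 := by
    by_contra hcon
    push_neg at hcon
    exact hvV ((Module.forall_dual_apply_eq_zero_iff (ZMod 2) _).mp hcon)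
  refine ⟨lam.toAddMonoidHom.comp ((SS G).mkQ).toAddMonoidHom, ?_, ?_⟩
  · rcases zmod2_cases (lam (Submodule.Quotient.mk v)) with h | h
    · exact absurd h hlam
    · simpa [Submodule.mkQ_apply] using h
  · intro g hg
    have : ((SS G).mkQ) g = 0 := by simpa [Submodule.mkQ_apply, Submodule.Quotient.mk_eq_zero] using hg
    simp [this]

lemma lamG_smul (l : G →+ ZMod 2) (hSS : ∀ g ∈ SS G, l g = 0) (r : R12) (g : G) :
    l (r • g) = cc r * l g := by
  rw [smul_decomp r g, map_add, hSS _ (add_mem (xx_smul_mem _) (yy_smul_mem _)), add_zero]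
  rcases zmod2_cases (cc r) with h | h <;> rw [h]
  · rw [alg_smul_zero, map_zero, zero_mul]
  · rw [alg_smul_one, one_mul]

/-- the functional `g ↦ l(g) • t` for `t ∈ {x, y}`. -/
def tDual (l : G →+ ZMod 2) (hSS : ∀ g ∈ SS G, l g = 0) (t : R12)
    (ht : ∀ r, r * t = algebraMap (ZMod 2) R12 (cc r) * t) : G →ₗ[R12] R12 where
  toFun g := l g • t
  map_add' g h := by show l (g + h) • t = l g • t + l h • t; rw [map_add, add_smul]
  map_smul' r g := by
    show l (r • g) • t = r • (l g • t)
    rw [lamG_smul l hSS, smul_eq_mul]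
    rcases zmod2_cases (l g) with h | h <;> rcases zmod2_cases (cc r) with h' | h' <;>
      rw [h, h'] <;> simp [ht r, h']

@[simp] lemma tDual_apply (l : G →+ ZMod 2) (hSS : ∀ g ∈ SS G, l g = 0) (t : R12)
    (ht : ∀ r, r * t = algebraMap (ZMod 2) R12 (cc r) * t) (g : G) :
    tDual l hSS t ht g = l g • t := rfl

lemma psi_v_mul_xx {v : G} (hxv : xx • v = 0) (psi : Module.Dual R12 G) : psi v * xx = 0 := by
  rw [mul_comm, ← smul_eq_mul, ← map_smul, hxv, map_zero]

/-- The functional `ψ ↦ (x-coefficient of ψ v) • x` on the double dual. -/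
def bigPhi (v : G) (hxv : xx • v = 0) : Module.Dual R12 (Module.Dual R12 G) where
  toFun psi := ax (psi v) • xx
  map_add' psi chi := by
    simp only [LinearMap.add_apply]
    rw [show ax (psi v + chi v) = ax (psi v) + ax (chi v) by simp [ax, map_add], add_smul]
  map_smul' r psi := by
    simp only [RingHom.id_apply, LinearMap.smul_apply, smul_eq_mul]
    have h2 : cc (psi v) = 0 := cc_eq_zero_of_mul_xx (psi_v_mul_xx hxv psi)
    rw [ax_mul, h2, zero_mul, add_zero]
    rcases zmod2_cases (ax (psi v)) with h | h <;> rcases zmod2_cases (cc r) with h' | h' <;>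
      rw [h, h'] <;> simp [mul_xx r, h']

lemma not_surj_eval {v : G} (hxv : xx • v = 0) (hv : v ∉ SS G) :
    ¬ Function.Surjective (Module.Dual.eval R12 G) := by
  intro hs
  obtain ⟨l, hl1, hl0⟩ := exists_lamG hv
  obtain ⟨u, hu⟩ := hs (bigPhi v hxv)
  have hval : ∀ psi : Module.Dual R12 G, psi u = ax (psi v) • xx := by
    intro psi
    have := congrArg (fun F => F psi) hu
    exact this
  have h1 := hval (tDual l hl0 xx mul_xx)
  have h2 := hval (tDual l hl0 yy mul_yy)
  rw [tDual_apply, tDual_apply, hl1, one_smul, ax_xx, one_smul] at h1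
  rw [tDual_apply, tDual_apply, hl1, one_smul, ax_yy, zero_smul] at h2
  -- h1 : l u • xx = xx, h2 : l u • yy = 0
  rcases zmod2_cases (l u) with h | h
  · rw [h, zero_smul] at h1; exact xx_ne_zero h1.symm
  · rw [h, one_smul] at h2; exact yy_ne_zero h2

lemma not_inj_eval {s t : G} (h : xx • s = yy • t) (hne : xx • s ≠ 0) :
    ¬ Function.Injective (Module.Dual.eval R12 G) := by
  intro hi
  have h0 : ∀ psi : Module.Dual R12 G, psi (xx • s) = 0 := by
    intro psi
    have h1 : psi (xx • s) = algebraMap (ZMod 2) R12 (cc (psi s)) * xx := by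
      rw [map_smul, smul_eq_mul, mul_comm, mul_xx]
    have h2 : psi (xx • s) = algebraMap (ZMod 2) R12 (cc (psi t)) * yy := by
      rw [h, map_smul, smul_eq_mul, mul_comm, mul_yy]
    rcases zmod2_cases (cc (psi s)) with hc | hc
    · rw [h1, hc]; simp
    · exfalso
      rw [h1, hc, map_one, one_mul] at h2
      rcases zmod2_cases (cc (psi t)) with hd | hd
      · rw [hd] at h2; simp at h2; exact xx_ne_zero h2
      · rw [hd, map_one, one_mul] at h2; exact xx_ne_yy h2
  have : Module.Dual.eval R12 G (xx • s) = 0 := by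
    ext psi
    simpa [Module.Dual.eval_apply] using h0 psi
  exact hne (hi (by rw [this, map_zero]))

end Modules

/-- The invariant: an element killed by `x` that is not in `mK`. -/
def QQ (K : Type) [AddCommGroup K] [Module R12 K] : Prop :=
  ∃ w : K, xx • w = 0 ∧ w ∉ SS K

lemma step {G M : Type} [AddCommGroup G] [Module R12 G] [AddCommGroup M] [Module R12 M]
    (f : G →ₗ[R12] M) (hf : Function.Surjective f)
    (hG : Function.Bijective (Module.Dual.eval R12 G)) (hM : QQ M) :
    QQ (LinearMap.ker f) := by
  obtain ⟨w, hxw, hw⟩ := hM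
  obtain ⟨g, rfl⟩ := hf w
  have hxg : xx • g ∈ LinearMap.ker f := by
    rw [LinearMap.mem_ker, map_smul, hxw]
  refine ⟨⟨xx • g, hxg⟩, ?_, ?_⟩
  · ext
    show xx • (xx • g) = 0
    rw [smul_smul, xx_mul_xx]
    exact zero_smul R12 g
  · rintro ⟨a', b', hab⟩
    have hab' : xx • g = xx • (a' : G) + yy • (b' : G) := by
      have := congrArg (Subtype.val) hab
      simpa using this
    have hz : xx • (g - (a' : G)) = yy • (b' : G) := by
      rw [smul_sub, hab']; abel
    by_cases h0 : xx • (g - (a' : G)) = 0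
    · have hmem : (g - (a' : G)) ∈ SS G := by
        by_contra hnot
        exact not_surj_eval h0 hnot hG.2
      obtain ⟨cg, dg, hcd⟩ := hmem
      apply hw
      have hfg : f g = f (g - (a' : G)) := by
        rw [map_sub, a'.2, sub_zero]
      rw [hfg, hcd]
      exact ⟨f cg, f dg, by rw [map_add, map_smul, map_smul]⟩
    · exact not_inj_eval hz h0 hG.1

lemma main : ∀ (n : ℕ) (K : Type) (_i1 : AddCommGroup K) (_i2 : Module R12 K),
    QQ K → ¬ GdimLE R12 n K := by
  intro n
  induction n with
  | zero =>
      intro K _i1 _i2 hQ hG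
      have hTR : TotallyReflexive R12 K := hG
      obtain ⟨w, h1, h2⟩ := hQ
      exact not_surj_eval h1 h2 hTR.1.2
  | succ n ih =>
      intro K _i1 _i2 hQ hG
      have hG' : ∃ (G : Type) (_ : AddCommGroup G) (_ : Module R12 G)
          (f : G →ₗ[R12] K), Function.Surjective f ∧ TotallyReflexive R12 G ∧
          GdimLE R12 n (LinearMap.ker f) := hG
      obtain ⟨G, _iG1, _iG2, f, hf, hTR, hrest⟩ := hG'
      exact ih (LinearMap.ker f) _ _ (step f hf hTR.1 hQ) hrest

/-- The derivation `D(r) = (x-coefficient of r) • x`. -/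
def DD : Derivation (ZMod 2) R12 R12 where
  toFun r := ax r • xx
  map_add' r s := by
    show ax (r + s) • xx = ax r • xx + ax s • xx
    rw [show ax (r + s) = ax r + ax s by simp [ax, map_add], add_smul]
  map_smul' c r := by
    simp only [RingHom.id_apply]
    have h1 : c • r = algebraMap (ZMod 2) R12 c * r := Algebra.smul_def c r
    rw [h1, ax_mul, cc_alg, ax_alg, mul_zero, add_zero, ← smul_smul]
  map_one_eq_zero' := by
    have : ax (1 : R12) = 0 := by simp [ax, map_one]
    show ax (1 : R12) • xx = 0
    rw [this, zero_smul]
  leibniz' a b := by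
    show ax (a * b) • xx = a • (ax b • xx) + b • (ax a • xx)
    rw [ax_mul, add_smul]
    congr 1
    · rcases zmod2_cases (ax b) with h | h <;> rcases zmod2_cases (cc a) with h' | h' <;>
        rw [h, h'] <;> simp [smul_eq_mul, mul_xx a, h']
    · rcases zmod2_cases (ax a) with h | h <;> rcases zmod2_cases (cc b) with h' | h' <;>
        rw [h, h'] <;> simp [smul_eq_mul, mul_xx b, h']

@[simp] lemma DD_apply (r : R12) : DD r = ax r • xx := rfl

lemma deriv_cc_xx (D : Derivation (ZMod 2) R12 R12) : cc (D xx) = 0 ∧ cc (D yy) = 0 := by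
  have h0 : xx * D yy + yy * D xx = 0 := by
    have h := D.leibniz xx yy
    rw [xx_mul_yy, map_zero] at h
    simpa [smul_eq_mul] using h.symm
  have h1 : algebraMap (ZMod 2) R12 (0 : ZMod 2)
      + algebraMap (ZMod 2) R12 (cc (D yy)) * xx
      + algebraMap (ZMod 2) R12 (cc (D xx)) * yy = 0 := by
    rw [map_zero, zero_add, ← mul_xx, ← mul_yy, mul_comm (D yy) xx, mul_comm (D xx) yy]
    exact h0
  have h2 := comp_zero h1
  exact ⟨h2.2.2, h2.2.1⟩

lemma QQ_der : QQ (Derivation (ZMod 2) R12 R12) := by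
  refine ⟨DD, ?_, ?_⟩
  · ext r
    show xx • DD r = 0
    rw [DD_apply, smul_eq_mul, mul_smul_comm, xx_mul_xx, smul_zero]
  · rintro ⟨D1, D2, hD⟩
    have hx : DD xx = (xx • D1 + yy • D2) xx := by rw [← hD]
    have e1 : DD xx = xx := by rw [DD_apply, ax_xx, one_smul]
    have e2 : (xx • D1 + yy • D2) xx = xx * D1 xx + yy * D2 xx := by
      simp [smul_eq_mul]
    have h3 : xx * D1 xx = 0 := by
      rw [mul_comm, mul_xx, (deriv_cc_xx D1).1, map_zero, zero_mul]
    have h4 : yy * D2 xx = 0 := by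
      rw [mul_comm, mul_yy, (deriv_cc_xx D2).1, map_zero, zero_mul]
    rw [e1, e2, h3, h4, add_zero] at hx
    exact xx_ne_zero hx

end

end Stmt12

/-- For `k = 𝔽₂` and `R = 𝔽₂[X,Y]/(X,Y)²`, the Gorenstein dimension of
`Der_k(R)` is infinite: `Der_k(R)` admits no finite resolution by totally reflexive
`R`-modules. -/
theorem stmt12 : ¬ ∃ n : ℕ, GdimLE R12 n (Derivation (ZMod 2) R12 R12) := by
  rintro ⟨n, hn⟩
  exact Stmt12.main n _ _ _ Stmt12.QQ_der hn
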